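/- Let N ≥ 1 and K ≥ 1 be integers and define the base down-chirp s_d[n] = exp( −2πi·( n²/(2NK²) − n/(2K) ) ) for n = 0,…,NK−1. For every integer m with 1 ≤ m ≤ NK−1, the autocorrelation magnitude satisfies (1/(NK)) · | Σ_{n=0}^{NK−m−1} conj(s_d[n]) · s_d[n+m] | = (1/(NK)) · | sin( (π·m/(NK²)) · (NK − m) ) / sin( π·m/(NK²) ) |. -/

import Mathlib

open Real Complex Finset

/-- The base down-chirp with chip number `N`, oversampling factor `K`, and `NK` samples:
`s_d[n] = exp(-2πi (n²/(2NK²) - n/(2K)))`. -/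
noncomputable def baseDownChirp (N K n : ℕ) : ℂ :=
  Complex.exp (-(2 * Real.pi * Complex.I) *
    ((n : ℂ) ^ 2 / (2 * (N : ℂ) * (K : ℂ) ^ 2) - (n : ℂ) / (2 * (K : ℂ))))

lemma abs_exp_mul_I_sub_one (θ : ℝ) :
    ‖Complex.exp ((θ : ℂ) * Complex.I) - 1‖ = 2 * |Real.sin (θ / 2)| := by
  have h : Complex.exp ((θ : ℂ) * Complex.I) - 1 =
      Complex.exp (((θ / 2 : ℝ) : ℂ) * Complex.I) *
        (2 * Complex.I * Complex.sin ((θ / 2 : ℝ) : ℂ)) := by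
    have e1 : Complex.exp (((θ / 2 : ℝ) : ℂ) * Complex.I) *
        Complex.exp (((θ / 2 : ℝ) : ℂ) * Complex.I) = Complex.exp ((θ : ℂ) * Complex.I) := by
      rw [← Complex.exp_add]; push_cast; ring_nf
    have e2 : Complex.exp (((θ / 2 : ℝ) : ℂ) * Complex.I) *
        Complex.exp (-((θ / 2 : ℝ) : ℂ) * Complex.I) = 1 := by
      rw [← Complex.exp_add]
      norm_num
    rw [Complex.sin]
    linear_combination e2 - e1 + (Complex.exp (((θ / 2 : ℝ) : ℂ) * Complex.I) ^ 2 -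
      Complex.exp (((θ / 2 : ℝ) : ℂ) * Complex.I) *
        Complex.exp (-((θ / 2 : ℝ) : ℂ) * Complex.I)) * Complex.I_sq
  rw [h, norm_mul, Complex.norm_exp_ofReal_mul_I, one_mul, norm_mul, norm_mul,
    Complex.norm_two, Complex.norm_I, mul_one, ← Complex.ofReal_sin, Complex.norm_real, Real.norm_eq_abs]

/-- Autocorrelation magnitude of the base down-chirp at timing lag `m`,
`1 ≤ m ≤ NK - 1`:
`(1/(NK)) |Σ_{n=0}^{NK-m-1} conj(s_d[n]) s_d[n+m]|
  = (1/(NK)) |sin((πm/(NK²))(NK - m)) / sin(πm/(NK²))|`. -/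
theorem downchirp_autocorrelation (N K : ℕ) (hN : 1 ≤ N) (hK : 1 ≤ K)
    (m : ℕ) (hm1 : 1 ≤ m) (hm2 : m ≤ N * K - 1) :
    (1 / ((N : ℝ) * K)) *
      ‖∑ n ∈ Finset.range (N * K - m),
        (starRingEnd ℂ) (baseDownChirp N K n) * baseDownChirp N K (n + m)‖ =
    (1 / ((N : ℝ) * K)) *
      |Real.sin ((Real.pi * m / ((N : ℝ) * K ^ 2)) * ((N : ℝ) * K - m)) /
        Real.sin (Real.pi * m / ((N : ℝ) * K ^ 2))| := by
  have hNK1 : 1 ≤ N * K := Nat.one_le_iff_ne_zero.mpr (by positivity)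
  have hmlt : m < N * K := by omega
  have hN0 : (N:ℝ) ≠ 0 := by positivity
  have hK0 : (K:ℝ) ≠ 0 := by positivity
  have hNC : (N:ℂ) ≠ 0 := by exact_mod_cast Nat.cast_ne_zero.mpr (by omega)
  have hKC : (K:ℂ) ≠ 0 := by exact_mod_cast Nat.cast_ne_zero.mpr (by omega)
  set a : ℝ := Real.pi * m / ((N:ℝ) * K ^ 2) with ha
  set z : ℂ := Complex.exp ((↑(-(2*a)) : ℂ) * Complex.I) with hz
  set c : ℝ := Real.pi * m / K - Real.pi * m^2 / ((N:ℝ) * K^2) with hc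
  have hb : ∀ j : ℕ, baseDownChirp N K j =
      Complex.exp (Complex.ofReal
        (-(2*Real.pi)*((j:ℝ)^2/(2*(N:ℝ)*(K:ℝ)^2) - (j:ℝ)/(2*(K:ℝ)))) * Complex.I) := by
    intro j
    rw [baseDownChirp]
    congr 1
    push_cast
    ring
  have hterm : ∀ n : ℕ, (starRingEnd ℂ) (baseDownChirp N K n) * baseDownChirp N K (n + m)
      = Complex.exp ((c:ℂ) * Complex.I) * z ^ n := by
    intro n
    have key : -(2*Real.pi)*(((n+m:ℕ):ℝ)^2/(2*(N:ℝ)*(K:ℝ)^2) - ((n+m:ℕ):ℝ)/(2*(K:ℝ)))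
        - (-(2*Real.pi)*((n:ℝ)^2/(2*(N:ℝ)*(K:ℝ)^2) - (n:ℝ)/(2*(K:ℝ))))
        = c + (n:ℝ) * (-(2*a)) := by
      rw [hc, ha]
      push_cast
      field_simp
      ring
    have keyC := congrArg (fun x : ℝ => (x : ℂ)) key
    push_cast at keyC
    rw [hb n, hb (n+m), ← Complex.exp_conj, hz, ← Complex.exp_nat_mul,
      ← Complex.exp_add, ← Complex.exp_add]
    simp only [map_mul, Complex.conj_ofReal, Complex.conj_I]
    congr 1
    push_cast
    linear_combination Complex.I * keyC
  have hz1 : z ≠ 1 := by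
    rw [hz]
    intro hone
    obtain ⟨k, hk⟩ := Complex.exp_eq_one_iff.mp hone
    rw [show ((k:ℂ) * (2 * ↑Real.pi * Complex.I)) = ((k:ℝ) * (2 * Real.pi) : ℝ) * Complex.I by
      push_cast; ring] at hk
    have hk2 : -(2*a) = (k:ℝ) * (2*Real.pi) := by
      exact_mod_cast Complex.ofReal_inj.mp (mul_right_cancel₀ Complex.I_ne_zero hk)
    have hpi := Real.pi_pos
    have hNK2 : (0:ℝ) < (N:ℝ) * K^2 := by positivity
    have hmR : (0:ℝ) < m := by exact_mod_cast hm1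
    have hmlt2 : (m:ℝ) < (N:ℝ) * K^2 := by
      have : (m:ℝ) < (N:ℝ) * K := by exact_mod_cast hmlt
      have : ((N:ℝ) * K) ≤ (N:ℝ) * K^2 := by
        have hK1 : (1:ℝ) ≤ K := by exact_mod_cast hK
        nlinarith
      linarith
    have hkval : (k:ℝ) = -(m / ((N:ℝ) * K^2)) := by
      rw [ha] at hk2
      field_simp at hk2 ⊢
      nlinarith [hk2]
    have h1 : (-1:ℝ) < (k:ℝ) := by
      rw [hkval]
      rw [neg_lt_neg_iff, div_lt_one hNK2]
      exact hmlt2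
    have h2 : (k:ℝ) < 0 := by
      rw [hkval, neg_lt_zero]
      exact div_pos hmR hNK2
    have : (-1:ℤ) < k := by exact_mod_cast h1
    have : k < 0 := by exact_mod_cast h2
    omega
  rw [Finset.sum_congr rfl (fun n _ => hterm n), ← Finset.mul_sum, norm_mul,
    Complex.norm_exp_ofReal_mul_I, one_mul, geom_sum_eq hz1, norm_div]
  have hzL : z ^ (N*K-m) = Complex.exp ((↑(-(2*a) * ((N*K-m : ℕ):ℝ)) : ℂ) * Complex.I) := by
    rw [hz, ← Complex.exp_nat_mul]
    congr 1
    push_cast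
    ring
  rw [hzL, abs_exp_mul_I_sub_one, hz, abs_exp_mul_I_sub_one]
  congr 1
  rw [abs_div]
  have hcast : ((N*K - m : ℕ) : ℝ) = (N:ℝ) * K - m := by
    push_cast [Nat.cast_sub hmlt.le]
    ring
  rw [show -(2*a) * ((N*K-m : ℕ):ℝ) / 2 = -(a * ((N*K-m : ℕ):ℝ)) by ring,
    show -(2*a)/2 = -a by ring, Real.sin_neg, Real.sin_neg, abs_neg, abs_neg, hcast]
  rw [mul_div_mul_left _ _ (two_ne_zero)]
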